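/- Let G be a finite abelian group of rank r (as a 2-group part) written as G = Z_{2^{α1}} ⊕ ... ⊕ Z_{2^{α_{r1}}} ⊕ Z_2^{r2} with α_i ≥ 2. If H ≤ G is an index-2 subgroup of rank r1 + r2, then the map H ↦ 2H is a bijection between the set of index-2 subgroups of G of full rank and the set of index-2 subgroups of 2G. -/

import Mathlib

/-- A finite abelian 2-group has rank `ρ` iff it has exactly `2^ρ - 1` elements of
order 2 (an element `x` has order 2 iff `x ≠ 0` and `x + x = 0`). -/
def HasRank2Group (H : Type*) [AddGroup H] (ρ : ℕ) : Prop :=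
  Nat.card {x : H // x ≠ 0 ∧ x + x = 0} = 2 ^ ρ - 1

/-- The doubling homomorphism `g ↦ g + g = 2g` of an abelian group. -/
def doubleHom (G : Type*) [AddCommGroup G] : G →+ G :=
  AddMonoidHom.id G + AddMonoidHom.id G

lemma doubleHom_apply {G : Type*} [AddCommGroup G] (x : G) : doubleHom G x = x + x := rfl

lemma card_pair_subtype {β : Type*} {a b : β} (h : a ≠ b) :
    Nat.card {x : β // x = a ∨ x = b} = 2 := by
  rw [Nat.card_congr (Equiv.subtypeEquivRight (q := (· ∈ ({a, b} : Set β)))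
    (fun x => by simp))]
  rw [Nat.card_coe_set_eq, Set.ncard_pair h]

lemma zmod_double_card (k : ℕ) (hk : 1 ≤ k) :
    Nat.card {x : ZMod (2 ^ k) // x + x = 0} = 2 := by
  have key : ∀ x : ZMod (2 ^ k), x + x = 0 ↔ x = 0 ∨ x = ((2 ^ (k - 1) : ℕ) : ZMod (2 ^ k)) := by
    intro x
    rw [← neg_eq_iff_add_eq_zero, ZMod.neg_eq_self_iff]
    constructor
    · rintro (rfl | h)
      · exact Or.inl rfl
      · right
        have hv : x.val = 2 ^ (k - 1) := by
          have : 2 * 2 ^ (k - 1) = 2 ^ k := by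
            rw [← pow_succ']
            congr 1
            omega
          omega
        rw [← hv, ZMod.natCast_zmod_val]
    · rintro (rfl | rfl)
      · exact Or.inl rfl
      · right
        rw [ZMod.val_cast_of_lt (by exact Nat.pow_lt_pow_right one_lt_two (by omega))]
        rw [← pow_succ']
        congr 1
        omega
  rw [Nat.card_congr (Equiv.subtypeEquivRight key)]
  apply card_pair_subtype
  intro h
  have h2 : ((2 ^ (k - 1) : ℕ) : ZMod (2 ^ k)).val = 2 ^ (k - 1) :=
    ZMod.val_cast_of_lt (Nat.pow_lt_pow_right one_lt_two (by omega))
  rw [← h, ZMod.val_zero] at h2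
  exact absurd h2 (by positivity)

lemma zmod2_double_card : Nat.card {x : ZMod 2 // x + x = 0} = 2 := by
  have : ∀ x : ZMod 2, x + x = 0 := by decide
  rw [Nat.card_congr (Equiv.subtypeUnivEquiv this)]
  simp [Nat.card_zmod]

lemma card_double_zero (r1 r2 : ℕ) (α : Fin r1 → ℕ) (hα : ∀ i, 1 ≤ α i) :
    Nat.card {x : (∀ i : Fin r1, ZMod (2 ^ α i)) × (Fin r2 → ZMod 2) // x + x = 0}
      = 2 ^ (r1 + r2) := by
  rw [Nat.card_congr (Equiv.subtypeEquivRight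
    (q := fun x : (∀ i : Fin r1, ZMod (2 ^ α i)) × (Fin r2 → ZMod 2) =>
      x.1 + x.1 = 0 ∧ x.2 + x.2 = 0) (fun x => by simp [Prod.ext_iff]))]
  beta_reduce
  rw [Nat.card_congr (Equiv.subtypeProdEquivProd (p := fun a : ∀ i : Fin r1, ZMod (2 ^ α i) => a + a = 0) (q := fun b : Fin r2 → ZMod 2 => b + b = 0)), Nat.card_prod]
  have h1 : Nat.card {f : ∀ i : Fin r1, ZMod (2 ^ α i) // f + f = 0} = 2 ^ r1 := by
    rw [Nat.card_congr (Equiv.subtypeEquivRight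
      (q := fun f : ∀ i : Fin r1, ZMod (2 ^ α i) => ∀ i, f i + f i = 0)
      (fun f => by simp [funext_iff]))]
    beta_reduce
    rw [Nat.card_congr (Equiv.subtypePiEquivPi
      (p := fun i (x : ZMod (2 ^ α i)) => x + x = 0)), Nat.card_pi]
    have h := fun i : Fin r1 => zmod_double_card (α i) (hα i)
    simp only [h, Finset.prod_const, Finset.card_univ, Fintype.card_fin]
  have h2 : Nat.card {f : Fin r2 → ZMod 2 // f + f = 0} = 2 ^ r2 := by
    rw [Nat.card_congr (Equiv.subtypeEquivRight
      (q := fun f : Fin r2 → ZMod 2 => ∀ i, f i + f i = 0)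
      (fun f => by simp [funext_iff]))]
    beta_reduce
    rw [Nat.card_congr (Equiv.subtypePiEquivPi
      (p := fun (_ : Fin r2) (x : ZMod 2) => x + x = 0)), Nat.card_pi]
    simp only [zmod2_double_card, Finset.prod_const, Finset.card_univ, Fintype.card_fin]
  rw [h1, h2, pow_add]

lemma card_double_succ {G : Type*} [AddCommGroup G] [Finite G] :
    Nat.card {x : G // x + x = 0}
      = Nat.card {x : G // x ≠ 0 ∧ x + x = 0} + 1 := by
  classical
  have e : Option {x : G // x ≠ 0 ∧ x + x = 0} ≃ {x : G // x + x = 0} :=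
    { toFun := fun x => x.elim ⟨0, by simp⟩ (fun y => ⟨y.1, y.2.2⟩)
      invFun := fun x => if h : x.1 = 0 then none else some ⟨x.1, h, x.2⟩
      left_inv := by
        rintro (_ | y)
        · simp
        · simp [y.2.1]
      right_inv := by
        intro x
        by_cases h : x.1 = 0
        · simp only [h, dite_true]
          exact Subtype.ext h.symm
        · simp [h] }
  cases nonempty_fintype G
  rw [← Nat.card_congr e, Nat.card_eq_fintype_card, Nat.card_eq_fintype_card,
    Fintype.card_option]

lemma card_ne_double (r1 r2 : ℕ) (α : Fin r1 → ℕ) (hα : ∀ i, 1 ≤ α i) :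
    Nat.card {x : (∀ i : Fin r1, ZMod (2 ^ α i)) × (Fin r2 → ZMod 2) // x ≠ 0 ∧ x + x = 0}
      = 2 ^ (r1 + r2) - 1 := by
  have h1 := card_double_succ (G := (∀ i : Fin r1, ZMod (2 ^ α i)) × (Fin r2 → ZMod 2))
  have h2 := card_double_zero r1 r2 α hα
  omega

section general
variable {G : Type*} [AddCommGroup G] [Finite G] {H : AddSubgroup G}

lemma ker_le_of_card_eq {n : ℕ}
    (hcard : Nat.card {x : G // x ≠ 0 ∧ x + x = 0} = n)
    (hH : Nat.card {x : ↥H // x ≠ 0 ∧ x + x = 0} = n) :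
    (doubleHom G).ker ≤ H := by
  set ι : {x : ↥H // x ≠ 0 ∧ x + x = 0} → {x : G // x ≠ 0 ∧ x + x = 0} :=
    fun x => ⟨x.1.1, by simpa using x.2.1, by exact_mod_cast x.2.2⟩ with hι
  have hinj : Function.Injective ι := by
    rintro ⟨⟨a, ha⟩, h⟩ ⟨⟨b, hb⟩, h'⟩ hab
    simpa [hι, Subtype.ext_iff] using hab
  have hbij : Function.Bijective ι :=
    (Nat.bijective_iff_injective_and_card ι).mpr ⟨hinj, by rw [hH, hcard]⟩
  intro x hx
  rw [AddMonoidHom.mem_ker] at hx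
  change x + x = 0 at hx
  by_cases h0 : x = 0
  · exact h0 ▸ zero_mem H
  obtain ⟨y, hy⟩ := hbij.2 ⟨x, h0, hx⟩
  have hyx : (y.1.1 : G) = x := congrArg Subtype.val hy
  rw [← hyx]
  exact y.1.2

lemma card_torsion_of_ker_le (hker : (doubleHom G).ker ≤ H) :
    Nat.card {x : ↥H // x ≠ 0 ∧ x + x = 0}
      = Nat.card {x : G // x ≠ 0 ∧ x + x = 0} :=
  Nat.card_congr
    { toFun := fun x => ⟨x.1.1, by simpa using x.2.1, by exact_mod_cast x.2.2⟩
      invFun := fun x =>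
        ⟨⟨x.1, hker (by rw [AddMonoidHom.mem_ker]; exact x.2.2)⟩,
          by simpa [Subtype.ext_iff] using x.2.1, Subtype.ext x.2.2⟩
      left_inv := fun x => rfl
      right_inv := fun x => rfl }

end general

/-- For `G = Z_{2^{α1}} ⊕ ... ⊕ Z_{2^{α_{r1}}} ⊕ Z_2^{r2}` with each
`αi ≥ 2`, the map `H ↦ 2H` is a bijection between the set of index-2 subgroups of
`G` of full rank `r1 + r2` and the set of index-2 subgroups of `2G`. -/
theorem stmt5 (r1 r2 : ℕ) (hr : 1 ≤ r1 + r2) (α : Fin r1 → ℕ)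
    (hmono : Antitone α) (hα : ∀ i, 2 ≤ α i) :
    Set.BijOn
      (fun H : AddSubgroup ((∀ i : Fin r1, ZMod (2 ^ α i)) × (Fin r2 → ZMod 2)) =>
        AddSubgroup.map (doubleHom _) H)
      {H | H.index = 2 ∧ HasRank2Group H (r1 + r2)}
      {H' | H' ≤ (doubleHom ((∀ i : Fin r1, ZMod (2 ^ α i)) × (Fin r2 → ZMod 2))).range ∧
        H'.relIndex (doubleHom ((∀ i : Fin r1, ZMod (2 ^ α i)) × (Fin r2 → ZMod 2))).range = 2} := by
  have hcardG := card_ne_double r1 r2 α (fun i => le_trans one_le_two (hα i))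
  set D := doubleHom ((∀ i : Fin r1, ZMod (2 ^ α i)) × (Fin r2 → ZMod 2)) with hD
  have key : ∀ H : AddSubgroup ((∀ i : Fin r1, ZMod (2 ^ α i)) × (Fin r2 → ZMod 2)),
      HasRank2Group H (r1 + r2) → D.ker ≤ H := by
    intro H hH
    exact ker_le_of_card_eq hcardG hH
  refine ⟨?_, ?_, ?_⟩
  · rintro H ⟨hidx, hrank⟩
    refine ⟨AddSubgroup.map_le_range D H, ?_⟩
    rw [← AddSubgroup.index_comap, AddSubgroup.comap_map_eq,
      sup_of_le_left (key H hrank)]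
    exact hidx
  · rintro H1 ⟨h1idx, h1rank⟩ H2 ⟨h2idx, h2rank⟩ heq
    have h := congrArg (AddSubgroup.comap D) heq
    rwa [AddSubgroup.comap_map_eq, AddSubgroup.comap_map_eq,
      sup_of_le_left (key H1 h1rank), sup_of_le_left (key H2 h2rank)] at h
  · rintro K ⟨hle, hrel⟩
    have hker : D.ker ≤ AddSubgroup.comap D K := by
      intro x hx
      rw [AddSubgroup.mem_comap, AddMonoidHom.mem_ker.mp hx]
      exact zero_mem K
    refine ⟨AddSubgroup.comap D K, ⟨?_, ?_⟩, ?_⟩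
    · rw [AddSubgroup.index_comap]
      exact hrel
    · exact (card_torsion_of_ker_le hker).trans hcardG
    · show AddSubgroup.map D (AddSubgroup.comap D K) = K
      rw [AddSubgroup.map_comap_eq, inf_eq_right.mpr hle]
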